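/- arXiv:1607.05064 — 4 statements merged into one kernel-verified Lean document; each statement's English description precedes it below -/
import Mathlib

section
/- The 5×5 circulant matrix with first row (1, α, 0, 0, α) with α = 2^{-1/ρ} (ρ > 0) is positive semidefinite if and only if ρ ≤ log 2 / log(2 cos(π/5)). -/
/-- The circulant matrix with first row (1, α, 0, 0, α), α = 2^{-1/ρ}, ρ > 0, is
positive semidefinite iff ρ ≤ log 2 / log(2 cos(π/5)). -/
theorem stmt1 (ρ : ℝ) (hρ : 0 < ρ) (M : Matrix (Fin 5) (Fin 5) ℝ)
    (hM : ∀ i j : Fin 5, M i j =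
      if i = j then 1
      else if ((i : ZMod 5) - (j : ZMod 5) = 1 ∨ (i : ZMod 5) - (j : ZMod 5) = -1)
        then (2 : ℝ) ^ (-(1 / ρ)) else 0) :
    M.PosSemidef ↔ ρ ≤ Real.log 2 / Real.log (2 * Real.cos (Real.pi / 5)) := by
  have hs : Real.sqrt 5 ^ 2 = 5 := Real.sq_sqrt (by norm_num)
  set s : ℝ := Real.sqrt 5 with hsdef
  have hs2 : 2 ≤ s := by
    nlinarith [Real.sqrt_nonneg 5, hs]
  set α : ℝ := (2 : ℝ) ^ (-(1 / ρ)) with hαdef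
  have hα : 0 < α := Real.rpow_pos_of_pos (by norm_num) _
  have hcos : 2 * Real.cos (Real.pi / 5) = (1 + s) / 2 := by
    rw [Real.cos_pi_div_five]; ring
  -- the log equivalence
  have hφ1 : 1 < (1 + s) / 2 := by linarith
  have hlogφ : 0 < Real.log ((1 + s) / 2) := Real.log_pos hφ1
  have hlogα : Real.log α = -(1 / ρ) * Real.log 2 := Real.log_rpow (by norm_num) _
  have hequiv : α * ((1 + s) / 2) ≤ 1 ↔
      ρ ≤ Real.log 2 / Real.log (2 * Real.cos (Real.pi / 5)) := by
    rw [hcos, le_div_iff₀ hlogφ]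
    rw [show α * ((1 + s) / 2) ≤ 1 ↔ Real.log (α * ((1 + s) / 2)) ≤ Real.log 1 from
      (Real.log_le_log_iff (by positivity) (by norm_num)).symm]
    rw [Real.log_mul (ne_of_gt hα) (by positivity), Real.log_one, hlogα]
    rw [show -(1/ρ) * Real.log 2 = -(Real.log 2 / ρ) by field_simp]
    rw [show -(Real.log 2 / ρ) + Real.log ((1+s)/2) ≤ 0 ↔
        Real.log ((1+s)/2) ≤ Real.log 2 / ρ from by constructor <;> intro <;> linarith]
    rw [le_div_iff₀ hρ, mul_comm]
  rw [← hequiv]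
  constructor
  · -- PosSemidef → α(1+s)/2 ≤ 1
    intro hP
    have h := hP.dotProduct_mulVec_nonneg ![4, -(1+s), s-1, s-1, -(1+s)]
    simp (config := { decide := true }) only [dotProduct, Matrix.mulVec,
      Fin.sum_univ_five, hM, Pi.star_apply, star_trivial,
      Matrix.cons_val_zero, Matrix.cons_val_one, Matrix.head_cons,
      Matrix.cons_val_two, Matrix.tail_cons, Matrix.cons_val_three,
      Matrix.cons_val_four, Matrix.head_fin_const, if_true, if_false] at h
    nlinarith [h, hs, hs2, hα]
  · -- α(1+s)/2 ≤ 1 → PosSemidef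
    intro hαφ
    refine Matrix.PosSemidef.of_dotProduct_mulVec_nonneg ?_ ?_
    · -- Hermitian
      ext i j
      simp only [Matrix.conjTranspose_apply, star_trivial, hM]
      by_cases h1 : i = j
      · subst h1; simp
      · have h1' : ¬ j = i := fun h => h1 h.symm
        rw [if_neg h1, if_neg h1']
        have : ((j : ZMod 5) - (i : ZMod 5) = 1 ∨ (j : ZMod 5) - (i : ZMod 5) = -1) ↔
            ((i : ZMod 5) - (j : ZMod 5) = 1 ∨ (i : ZMod 5) - (j : ZMod 5) = -1) := by
          constructor <;> rintro (h | h)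
          · right; rw [show (i:ZMod 5) - j = -((j:ZMod 5) - i) from (neg_sub _ _).symm, h]
          · left; rw [show (i:ZMod 5) - j = -((j:ZMod 5) - i) from (neg_sub _ _).symm, h]; exact neg_neg _
          · right; rw [show (j:ZMod 5) - i = -((i:ZMod 5) - j) from (neg_sub _ _).symm, h]
          · left; rw [show (j:ZMod 5) - i = -((i:ZMod 5) - j) from (neg_sub _ _).symm, h]; exact neg_neg _
        rw [if_congr this rfl rfl]
    · intro x
      simp (config := { decide := true }) only [dotProduct, Matrix.mulVec,
        Fin.sum_univ_five, hM, Pi.star_apply, star_trivial, if_true, if_false]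
      set x0 := x 0; set x1 := x 1; set x2 := x 2; set x3 := x 3; set x4 := x 4
      have hid : (1+s)/2*(x0^2+x1^2+x2^2+x3^2+x4^2)
            + 2*(x0*x1+x1*x2+x2*x3+x3*x4+x4*x0)
          = (1+s)/2*(x0 + (s-1)/2*(x1+x4))^2 + (x1 + x2 - (s-1)/2*x4)^2
            + (s-1)/2*(x2 + (1+s)/2*x3 + x4)^2 := by
        linear_combination ((-1/8)*x4^2 - s/8*x4^2 - 1/2*x3*x4 - 1/8*x3^2 - s/8*x3^2
          - 1/2*x2*x3 + 1/4*x1*x4 - s/4*x1*x4 + 1/8*x1^2 - s/8*x1^2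
          - 1/2*x0*x4 - 1/2*x0*x1) * hs
      have hQ : 0 ≤ (1+s)/2*(x0^2+x1^2+x2^2+x3^2+x4^2)
            + 2*(x0*x1+x1*x2+x2*x3+x3*x4+x4*x0) := by
        rw [hid]
        have h1 : (0:ℝ) ≤ (1+s)/2 := by linarith
        have h2 : (0:ℝ) ≤ (s-1)/2 := by linarith
        positivity
      have hSig : (0:ℝ) ≤ x0^2+x1^2+x2^2+x3^2+x4^2 := by positivity
      nlinarith [mul_nonneg hα.le hQ, mul_nonneg (sub_nonneg.2 hαφ) hSig]
end

section
/- Let g₁ : Z_q → ℝ (q odd, q ≥ 3) be defined by g₁(0) = 1, g₁(±1) = φ with φ = 1/(2cos(π/q)), and g₁(x) = 0 otherwise. Then its Fourier transform ĝ₁(ω) = Σ_x g₁(x)·e^{2πiωx/q} = 1 + 2φ·cos(2πω/q) is real, nonnegative for all ω ∈ Z_q, and equals 0 exactly at ω = ±(q−1)/2. -/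
/-- Lovász' one-dimensional assignment on Z_q: g₁(0) = 1, g₁(±1) = 1/(2cos(π/q)),
g₁(x) = 0 otherwise. -/
noncomputable def g1 (q : ℕ) (x : ZMod q) : ℝ :=
  if x = 0 then 1 else if x = 1 ∨ x = -1 then 1 / (2 * Real.cos (Real.pi / q)) else 0

lemma cosB {q k v : ℕ} (hq : q = 2*k+1) (hv : v ≤ k) :
    Real.cos (Real.pi - Real.pi/q) ≤ Real.cos (2*Real.pi*v/q) ∧
    (Real.cos (2*Real.pi*v/q) = Real.cos (Real.pi - Real.pi/q) ↔ v = k) := by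
  have hq0 : (0:ℝ) < q := by
    have : 0 < q := by omega
    exact_mod_cast this
  have hpi := Real.pi_pos
  have hx : (0:ℝ) ≤ 2*Real.pi*v/q := by positivity
  have hy : Real.pi - Real.pi/q ≤ Real.pi := by
    have : 0 ≤ Real.pi/q := by positivity
    linarith
  have hqr : (q:ℝ) = 2*k+1 := by exact_mod_cast congrArg (Nat.cast : ℕ → ℝ) hq
  have key : Real.pi - Real.pi/q = (Real.pi*(2*k))/q := by
    field_simp
    nlinarith
  have hvr : (v:ℝ) ≤ k := by exact_mod_cast hv
  have hxy : 2*Real.pi*v/q ≤ Real.pi - Real.pi/q := by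
    rw [key, div_le_div_iff₀ hq0 hq0]
    nlinarith [mul_nonneg (mul_pos hpi hq0).le (sub_nonneg.2 hvr)]
  constructor
  · exact Real.cos_le_cos_of_nonneg_of_le_pi hx hy hxy
  constructor
  · intro h
    by_contra hne
    have hvk : (v:ℝ) + 1 ≤ k := by exact_mod_cast lt_of_le_of_ne hv hne
    have hlt : 2*Real.pi*v/q < Real.pi - Real.pi/q := by
      rw [key, div_lt_div_iff₀ hq0 hq0]
      nlinarith [mul_pos (mul_pos hpi hq0) (show (0:ℝ) < k - v by linarith)]
    have := Real.cos_lt_cos_of_nonneg_of_le_pi hx hy hlt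
    linarith [h.le, h.ge]
  · intro h
    subst h
    rw [key]
    ring_nf

lemma cosC {q k v : ℕ} (hq : q = 2*k+1) (hv : v < q) :
    Real.cos (Real.pi - Real.pi/q) ≤ Real.cos (2*Real.pi*v/q) ∧
    (Real.cos (2*Real.pi*v/q) = Real.cos (Real.pi - Real.pi/q) ↔ v = k ∨ v = k+1) := by
  rcases le_or_gt v k with h | h
  · have hB := cosB hq h
    refine ⟨hB.1, ?_⟩
    rw [hB.2]
    omega
  · set w := q - v with hw
    have hwk : w ≤ k := by omega
    have hq0 : (0:ℝ) < q := by
      have : 0 < q := by omega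
      exact_mod_cast this
    have hcast : (v:ℝ) = (q:ℝ) - w := by
      have : w + v = q := by omega
      have := congrArg (Nat.cast : ℕ → ℝ) this
      push_cast at this
      linarith
    have heq : 2*Real.pi*v/q = 2*Real.pi - 2*Real.pi*w/q := by
      rw [hcast]
      field_simp
    rw [heq, Real.cos_two_pi_sub]
    have hB := cosB hq hwk
    refine ⟨hB.1, ?_⟩
    rw [hB.2]
    omega

/-- For q odd ≥ 3, the Fourier transform of g₁ equals the real number
1 + 2φ cos(2πω/q) (φ = 1/(2cos(π/q))), is nonnegative, and vanishes exactly at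
ω = ±(q−1)/2. -/
theorem stmt7 (q : ℕ) [NeZero q] (hq : Odd q) (hq3 : 3 ≤ q) :
    (∀ ω : ZMod q,
      (∑ x : ZMod q, (g1 q x : ℂ) *
          Complex.exp (2 * Real.pi * Complex.I * (((ω * x).val : ℕ) : ℂ) / q)) =
        ((1 + 2 * (1 / (2 * Real.cos (Real.pi / q))) *
            Real.cos (2 * Real.pi * ((ω.val : ℕ) : ℝ) / q) : ℝ) : ℂ)) ∧
    (∀ ω : ZMod q,
      0 ≤ 1 + 2 * (1 / (2 * Real.cos (Real.pi / q))) *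
            Real.cos (2 * Real.pi * ((ω.val : ℕ) : ℝ) / q)) ∧
    (∀ ω : ZMod q,
      ((∑ x : ZMod q, (g1 q x : ℂ) *
          Complex.exp (2 * Real.pi * Complex.I * (((ω * x).val : ℕ) : ℂ) / q)) = 0 ↔
        ω = (((q - 1) / 2 : ℕ) : ZMod q) ∨ ω = -(((q - 1) / 2 : ℕ) : ZMod q))) := by
  obtain ⟨k, hk⟩ := hq
  have hqk : q = 2*k+1 := by omega
  have hk1 : 1 ≤ k := by omega
  haveI : Fact (1 < q) := ⟨by omega⟩
  have hq0 : (0:ℝ) < q := by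
    have : 0 < q := by omega
    exact_mod_cast Nat.pos_of_ne_zero (NeZero.ne q)
  have hpi := Real.pi_pos
  set c := Real.cos (Real.pi / q) with hc_def
  have hc : 0 < c := by
    apply Real.cos_pos_of_mem_Ioo
    constructor
    · have : 0 < Real.pi / q := by positivity
      linarith
    · calc Real.pi / q < Real.pi / 2 := by
            apply div_lt_div_of_pos_left hpi (by norm_num)
            exact_mod_cast (by omega : 2 < q)
          _ ≤ Real.pi / 2 := le_refl _
  -- basic distinctness in ZMod q
  have hone : (1 : ZMod q) ≠ 0 := one_ne_zero
  have hneg : (-1 : ZMod q) ≠ 0 := neg_ne_zero.2 one_ne_zero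
  have h1n : (1 : ZMod q) ≠ -1 := by
    intro h
    have h2 : ((2:ℕ) : ZMod q) = 0 := by
      push_cast
      linear_combination h
    rw [ZMod.natCast_eq_zero_iff] at h2
    have := Nat.le_of_dvd (by norm_num) h2
    omega
  -- Fourier formula
  have hfour : ∀ ω : ZMod q,
      (∑ x : ZMod q, (g1 q x : ℂ) *
          Complex.exp (2 * Real.pi * Complex.I * (((ω * x).val : ℕ) : ℂ) / q)) =
        ((1 + 2 * (1 / (2 * c)) *
            Real.cos (2 * Real.pi * ((ω.val : ℕ) : ℝ) / q) : ℝ) : ℂ) := by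
    intro ω
    set E : ZMod q → ℂ := fun x =>
      Complex.exp (2 * Real.pi * Complex.I * (((ω * x).val : ℕ) : ℂ) / q) with hE
    have hsub : (∑ x : ZMod q, (g1 q x : ℂ) * E x)
        = ∑ x ∈ ({0, 1, -1} : Finset (ZMod q)), (g1 q x : ℂ) * E x := by
      refine (Finset.sum_subset (Finset.subset_univ _) ?_).symm
      intro x _ hx
      simp only [Finset.mem_insert, Finset.mem_singleton, not_or] at hx
      simp [g1, hx.1, hx.2.1, hx.2.2]
    rw [hsub]
    rw [Finset.sum_insert (by simp [hone.symm, hneg.symm]),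
        Finset.sum_insert (by simp [h1n]), Finset.sum_singleton]
    have hg0 : g1 q 0 = 1 := by simp [g1]
    have hg1 : g1 q 1 = 1 / (2 * c) := by simp [g1, hone, hc_def]
    have hgn : g1 q (-1) = 1 / (2 * c) := by simp [g1, hneg, hc_def]
    rw [hg0, hg1, hgn]
    have hE0 : E 0 = 1 := by simp [hE]
    have hv : ω.val < q := ZMod.val_lt ω
    set θ : ℝ := 2 * Real.pi * (ω.val : ℝ) / q with hθ
    have hE1 : E 1 = Complex.exp ((θ : ℂ) * Complex.I) := by
      rw [hE]
      simp only [mul_one]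
      congr 1
      push_cast [hθ]
      ring
    have hkey : E 1 + E (-1) = ((2 * Real.cos θ : ℝ) : ℂ) := by
      by_cases hω : ω = 0
      · subst hω
        simp only [hE, hθ]
        norm_num [Complex.ext_iff]
      · have hwval : (-ω).val = q - ω.val := by
          rw [ZMod.neg_val]
          simp [hω]
        have hEn : E (-1) = Complex.exp (-(θ : ℂ) * Complex.I) := by
          rw [hE]
          simp only [mul_neg_one]
          rw [hwval]
          have hqc : (q:ℂ) ≠ 0 := Nat.cast_ne_zero.2 (by omega)
          have h1 : ((q - ω.val : ℕ) : ℂ) = (q:ℂ) - ((ω.val : ℕ) : ℂ) := by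
            push_cast [Nat.cast_sub hv.le]
            ring
          rw [show (2 * (Real.pi:ℂ) * Complex.I * ((q - ω.val : ℕ) : ℂ) / q)
              = 2 * (Real.pi:ℂ) * Complex.I + (-(θ:ℂ) * Complex.I) by
            rw [h1, hθ]
            push_cast
            field_simp
            ring]
          rw [Complex.exp_add, Complex.exp_two_pi_mul_I, one_mul]
        rw [hE1, hEn, Complex.exp_mul_I, Complex.exp_mul_I]
        push_cast
        simp [Complex.cos_neg, Complex.sin_neg]
        ring
    rw [hE0]
    rw [show ((1:ℝ):ℂ) * 1 + (((1 / (2 * c) : ℝ) : ℂ) * E 1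
        + ((1 / (2 * c) : ℝ) : ℂ) * E (-1))
        = 1 + ((1 / (2 * c) : ℝ) : ℂ) * (E 1 + E (-1)) by push_cast; ring]
    rw [hkey]
    push_cast
    ring
  -- real analysis facts
  have hreal : ∀ ω : ZMod q,
      (0 ≤ 1 + 2 * (1 / (2 * c)) * Real.cos (2 * Real.pi * ((ω.val : ℕ) : ℝ) / q)) ∧
      ((1 + 2 * (1 / (2 * c)) * Real.cos (2 * Real.pi * ((ω.val : ℕ) : ℝ) / q)) = 0 ↔
        ω.val = k ∨ ω.val = k + 1) := by
    intro ω
    have hv : ω.val < q := ZMod.val_lt ω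
    have hC := cosC hqk hv
    rw [Real.cos_pi_sub] at hC
    set t := Real.cos (2 * Real.pi * ((ω.val : ℕ) : ℝ) / q) with ht
    have hF : 1 + 2 * (1 / (2 * c)) * t = (c + t) / c := by
      field_simp
    constructor
    · rw [hF]
      apply div_nonneg _ hc.le
      linarith [hC.1]
    · rw [hF, div_eq_zero_iff]
      constructor
      · intro h
        rcases h with h | h
        · exact hC.2.mp (by linarith)
        · exact absurd h hc.ne'
      · intro h
        left
        have := hC.2.mpr h
        linarith
  refine ⟨hfour, fun ω => (hreal ω).1, ?_⟩
  intro ω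
  rw [hfour ω, Complex.ofReal_eq_zero, (hreal ω).2]
  have hq12 : (q - 1) / 2 = k := by omega
  rw [hq12]
  have hkq : k < q := by omega
  have hk1q : k + 1 < q := by omega
  have hvk : ((k : ℕ) : ZMod q).val = k := ZMod.val_cast_of_lt hkq
  have hvk1 : ((k + 1 : ℕ) : ZMod q).val = k + 1 := ZMod.val_cast_of_lt hk1q
  have hnegk : -((k : ℕ) : ZMod q) = ((k + 1 : ℕ) : ZMod q) := by
    have : ((k : ℕ) : ZMod q) + ((k + 1 : ℕ) : ZMod q) = 0 := by
      rw [← Nat.cast_add, show k + (k + 1) = q by omega, ZMod.natCast_self]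
    linear_combination -this
  constructor
  · rintro (h | h)
    · left
      exact ZMod.val_injective q (by rw [h, hvk])
    · right
      rw [hnegk]
      exact ZMod.val_injective q (by rw [h, hvk1])
  · rintro (h | h)
    · left
      rw [h, hvk]
    · right
      rw [h, hnegk, hvk1]
end

section
/- For q odd ≥ 3, c = (q−1)/2, and x ∈ Z_q^n lying in the sphere S_u^1 = {x : exactly u coordinates equal ±1 and the remaining n−u equal 0}, the Fourier transform of the indicator of S_ℓ^c = {ω : exactly ℓ coordinates equal ±c, rest 0} evaluated at x equals Σ_{j=0}^{ℓ} C(u,j)·C(n−u, ℓ−j)·(−1)^j · 2^ℓ · (cos(π/q))^j, where C denotes binomial coefficients. -/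
open scoped Classical
open Finset Polynomial

private lemma coeff_one_add_pow (a : ℂ) (m j : ℕ) :
    ((1 + C a * X) ^ m).coeff j = (m.choose j : ℂ) * a ^ j := by
  rw [add_comm (1 : ℂ[X]), add_pow, Polynomial.finset_sum_coeff]
  simp only [one_pow, mul_one, mul_pow, ← C_pow, ← C_eq_natCast, coeff_mul_C, coeff_C_mul,
    coeff_X_pow]
  rw [Finset.sum_eq_single j (fun b _ hb => by simp [Ne.symm hb])
    (fun hj => by simp only [Finset.mem_range, not_lt] at hj
                  simp [Nat.choose_eq_zero_of_lt (Nat.lt_of_succ_le hj)])]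
  simp [mul_comm]

private lemma coeff_prod_one_add {ι : Type*} [DecidableEq ι] (s : Finset ι) (g : ι → ℂ) :
    ∀ k : ℕ, (∏ i ∈ s, (1 + C (g i) * X)).coeff k = ∑ A ∈ s.powersetCard k, ∏ i ∈ A, g i := by
  induction s using Finset.induction with
  | empty =>
    intro k
    cases k with
    | zero => simp
    | succ k =>
      rw [Finset.powersetCard_eq_empty.mpr (by simp)]
      simp [Polynomial.coeff_one]
  | @insert a s ha ih =>
    intro k
    cases k with
    | zero =>
      simp only [Polynomial.coeff_zero_eq_eval_zero]
      simp [Polynomial.eval_prod]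
    | succ k =>
      rw [Finset.prod_insert ha, Finset.powersetCard_succ_insert ha,
        Finset.sum_union, add_mul, one_mul, mul_assoc, Polynomial.coeff_add,
        Polynomial.coeff_C_mul, Polynomial.coeff_X_mul, ih, ih,
        Finset.sum_image ?_]
      · rw [Finset.mul_sum]
        congr 1
        refine Finset.sum_congr rfl fun A hA => ?_
        rw [Finset.mem_powersetCard] at hA
        rw [Finset.prod_insert (fun h => ha (hA.1 h))]
      · intro A hA B hB hAB
        rw [Finset.mem_coe, Finset.mem_powersetCard] at hA hB
        have haA : a ∉ A := fun h => ha (hA.1 h)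
        have haB : a ∉ B := fun h => ha (hB.1 h)
        rw [← Finset.erase_insert haA, ← Finset.erase_insert haB, hAB]
      · rw [Finset.disjoint_left]
        intro A hA hA'
        rw [Finset.mem_powersetCard] at hA
        rw [Finset.mem_image] at hA'
        obtain ⟨B, _, rfl⟩ := hA'
        exact ha (hA.1 (Finset.mem_insert_self a B))

private lemma esum_aux {q : ℕ} [NeZero q] (ζ : ℂ) (hζ : ζ ^ q = 1) {ι : Type*}
    (s : Finset ι) (f : ι → ZMod q) :
    ζ ^ (∑ k ∈ s, f k).val = ∏ k ∈ s, ζ ^ (f k).val := by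
  classical
  induction s using Finset.induction with
  | empty => simp
  | @insert a s ha ih =>
    rw [Finset.sum_insert ha, Finset.prod_insert ha, ZMod.val_add,
      ← pow_eq_pow_mod _ hζ, pow_add, ih]

/-- For q odd ≥ 3, c = (q−1)/2, and x in the sphere S_u^1 (exactly u coordinates
equal to ±1, the rest 0), the Fourier transform of the indicator of the sphere
S_ℓ^c (exactly ℓ coordinates equal to ±c, the rest 0) at x equals
Σ_j C(u,j) C(n−u,ℓ−j) (−1)^j 2^ℓ cos(π/q)^j. -/
theorem stmt12 (q : ℕ) [NeZero q] (hq : Odd q) (hq3 : 3 ≤ q) (n u ℓ : ℕ)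
    (hu : u ≤ n) (hℓ : ℓ ≤ n) (x : Fin n → ZMod q)
    (hx1 : ∀ i, x i = 0 ∨ x i = 1 ∨ x i = -1)
    (hx2 : (Finset.univ.filter (fun i => x i ≠ 0)).card = u) :
    (∑ ω ∈ Finset.univ.filter (fun ω : Fin n → ZMod q =>
        (∀ i, ω i = 0 ∨ ω i = (((q - 1) / 2 : ℕ) : ZMod q) ∨
            ω i = -(((q - 1) / 2 : ℕ) : ZMod q)) ∧
        (Finset.univ.filter (fun i => ω i ≠ 0)).card = ℓ),
      Complex.exp (2 * Real.pi * Complex.I * ((((∑ k, ω k * x k : ZMod q)).val : ℂ)) / q)) =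
    ((∑ j ∈ Finset.range (ℓ + 1), (u.choose j : ℝ) * ((n - u).choose (ℓ - j) : ℝ) *
        (-1) ^ j * 2 ^ ℓ * Real.cos (Real.pi / q) ^ j : ℝ) : ℂ) := by
  have hq1 : 1 < q := by omega
  haveI : Fact (1 < q) := ⟨hq1⟩
  have hqC : (q : ℂ) ≠ 0 := Nat.cast_ne_zero.mpr (by omega)
  have hqR : (q : ℝ) ≠ 0 := Nat.cast_ne_zero.mpr (by omega)
  set m : ℕ := (q - 1) / 2 with hm
  obtain ⟨t, ht⟩ := hq
  have h2m : 2 * m + 1 = q := by omega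
  have hm1 : 1 ≤ m := by omega
  have hmq : m < q := by omega
  set ζ : ℂ := Complex.exp (2 * Real.pi * Complex.I / q) with hζdef
  have hζq : ζ ^ q = 1 := by
    rw [hζdef, ← Complex.exp_nat_mul]
    rw [show (q : ℂ) * (2 * Real.pi * Complex.I / q) = 2 * Real.pi * Complex.I by
      field_simp]
    exact Complex.exp_two_pi_mul_I
  set e : ZMod q → ℂ := fun a => ζ ^ a.val with hedef
  have hexp : ∀ v : ℕ, Complex.exp (2 * Real.pi * Complex.I * v / q) = ζ ^ v := by
    intro v
    rw [hζdef, ← Complex.exp_nat_mul]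
    congr 1
    ring
  set c : ZMod q := ((m : ℕ) : ZMod q) with hcdef
  have hcval : c.val = m := by
    rw [hcdef, ZMod.val_natCast, Nat.mod_eq_of_lt hmq]
  have hncast : -c = (((q - m : ℕ) : ℕ) : ZMod q) := by
    rw [hcdef]
    push_cast [Nat.cast_sub hmq.le]
    simp [ZMod.natCast_self]
  have hncval : (-c).val = q - m := by
    rw [hncast, ZMod.val_natCast, Nat.mod_eq_of_lt (by omega)]
  have hc0 : c ≠ 0 := by
    intro h
    rw [h, ZMod.val_zero] at hcval
    omega
  have hnc0 : -c ≠ 0 := by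
    intro h
    rw [h, ZMod.val_zero] at hncval
    omega
  have hcnc : c ≠ -c := by
    intro h
    rw [← h, hcval] at hncval
    omega
  -- the two key exponential values
  have hzv : ∀ v : ℕ, ζ ^ v =
      Complex.cos ((2 * Real.pi * v / q : ℝ)) + Complex.sin ((2 * Real.pi * v / q : ℝ)) * Complex.I := by
    intro v
    rw [← Complex.exp_mul_I, hζdef, ← Complex.exp_nat_mul]
    congr 1
    push_cast
    ring
  have hqreal : (q : ℝ) = 2 * (m : ℝ) + 1 := by exact_mod_cast h2m.symm
  have hkey : e c + e (-c) = ((-2 * Real.cos (Real.pi / q) : ℝ) : ℂ) := by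
    show ζ ^ c.val + ζ ^ (-c).val = _
    rw [hcval, hncval, hzv m, hzv (q - m)]
    have h1 : 2 * Real.pi * (m : ℝ) / q = Real.pi - Real.pi / q := by
      field_simp
      rw [hqreal]; ring
    have h2 : 2 * Real.pi * ((q - m : ℕ) : ℝ) / q = Real.pi + Real.pi / q := by
      push_cast [Nat.cast_sub hmq.le]
      field_simp
      rw [hqreal]; ring
    rw [h1, h2]
    simp only [← Complex.ofReal_cos, ← Complex.ofReal_sin]
    rw [Real.cos_pi_sub, Real.sin_pi_sub]
    simp only [Real.cos_add, Real.sin_add, Real.cos_pi, Real.sin_pi]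
    push_cast
    ring
  set av : ℂ := ((-2 * Real.cos (Real.pi / q) : ℝ) : ℂ) with havdef
  have hG : ∀ i, e (c * x i) + e (-c * x i) = if x i = 0 then 2 else av := by
    intro i
    rcases hx1 i with h | h | h
    · rw [h, mul_zero, mul_zero, if_pos rfl]
      show ζ ^ (0 : ZMod q).val + ζ ^ (0 : ZMod q).val = 2
      rw [ZMod.val_zero, pow_zero]; norm_num
    · rw [h, mul_one, mul_one, if_neg (one_ne_zero : (1 : ZMod q) ≠ 0), hkey]
    · rw [h, mul_neg_one, mul_neg_one, neg_neg,
        if_neg (neg_ne_zero.mpr (one_ne_zero : (1 : ZMod q) ≠ 0)), add_comm, hkey]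
  -- Step A : rewrite each summand as a product
  have stepA : ∀ ω : Fin n → ZMod q,
      Complex.exp (2 * Real.pi * Complex.I * (((∑ k, ω k * x k : ZMod q)).val : ℂ) / q)
        = ∏ k, e (ω k * x k) := by
    intro ω
    rw [hexp]
    exact esum_aux ζ hζq Finset.univ _
  rw [Finset.sum_congr rfl fun ω _ => stepA ω]
  -- Step B : fiber the sum over supports
  rw [← Finset.sum_fiberwise_of_maps_to
    (g := fun ω : Fin n → ZMod q => Finset.univ.filter (fun i => ω i ≠ 0))
    (t := Finset.powersetCard ℓ (Finset.univ : Finset (Fin n)))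
    (fun ω hω => by
      rw [Finset.mem_powersetCard]
      exact ⟨Finset.subset_univ _, (Finset.mem_filter.mp hω).2.2⟩)]
  -- Step C : compute each fiber
  have stepC : ∀ A ∈ Finset.powersetCard ℓ (Finset.univ : Finset (Fin n)),
      (∑ ω ∈ (Finset.univ.filter (fun ω : Fin n → ZMod q =>
          (∀ i, ω i = 0 ∨ ω i = c ∨ ω i = -c) ∧
          (Finset.univ.filter (fun i => ω i ≠ 0)).card = ℓ)).filter
            (fun ω => Finset.univ.filter (fun i => ω i ≠ 0) = A),
        ∏ k, e (ω k * x k))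
        = ∏ i ∈ A, (e (c * x i) + e (-c * x i)) := by
    intro A hA
    rw [Finset.mem_powersetCard] at hA
    have hpair : ∀ i ∈ A, e (c * x i) + e (-c * x i)
        = ∑ v ∈ ({c, -c} : Finset (ZMod q)), e (v * x i) := fun i _ => by
      rw [Finset.sum_pair hcnc]
    rw [Finset.prod_congr rfl hpair, Finset.prod_sum]
    refine Finset.sum_nbij' (fun ω => fun i _ => ω i)
      (fun p => fun i => if h : i ∈ A then p i h else 0) ?_ ?_ ?_ ?_ ?_
    · -- maps to pi
      intro ω hω
      rw [Finset.mem_filter] at hω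
      obtain ⟨hω1, hωA⟩ := hω
      rw [Finset.mem_filter] at hω1
      rw [Finset.mem_pi]
      intro i hi
      have hne : ω i ≠ 0 := by
        have : i ∈ Finset.univ.filter (fun i => ω i ≠ 0) := hωA ▸ hi
        exact (Finset.mem_filter.mp this).2
      show ω i ∈ ({c, -c} : Finset (ZMod q))
      rcases hω1.2.1 i with h | h | h
      · exact absurd h hne
      · rw [h]; exact Finset.mem_insert_self _ _
      · rw [h]; exact Finset.mem_insert_of_mem (Finset.mem_singleton_self _)
    · -- maps back
      intro p hp
      rw [Finset.mem_pi] at hp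
      have hsupp : Finset.univ.filter
          (fun i => (if h : i ∈ A then p i h else 0) ≠ 0) = A := by
        ext i
        simp only [Finset.mem_filter, Finset.mem_univ, true_and]
        constructor
        · intro h
          by_contra hiA
          rw [dif_neg hiA] at h
          exact h rfl
        · intro hiA
          rw [dif_pos hiA]
          have := hp i hiA
          rcases Finset.mem_insert.mp this with h | h
          · rw [h]; exact hc0
          · rw [Finset.mem_singleton.mp h]; exact hnc0
      rw [Finset.mem_filter, Finset.mem_filter]
      refine ⟨⟨Finset.mem_univ _, ?_, by rw [hsupp, hA.2]⟩, hsupp⟩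
      intro i
      by_cases hiA : i ∈ A
      · simp only [dif_pos hiA]
        rcases Finset.mem_insert.mp (hp i hiA) with h | h
        · exact Or.inr (Or.inl h)
        · exact Or.inr (Or.inr (Finset.mem_singleton.mp h))
      · simp [dif_neg hiA]
    · -- left inverse
      intro ω hω
      rw [Finset.mem_filter] at hω
      funext i
      by_cases hiA : i ∈ A
      · simp only [dif_pos hiA]
      · simp only [dif_neg hiA]
        by_contra h
        exact hiA (hω.2 ▸ Finset.mem_filter.mpr ⟨Finset.mem_univ _, fun h0 => h h0.symm⟩)
    · -- right inverse
      intro p hp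
      funext i hi
      simp only [dif_pos hi]
    · -- values agree
      intro ω hω
      rw [Finset.mem_filter] at hω
      show (∏ k, e (ω k * x k)) = ∏ a ∈ A.attach, e (ω a.1 * x a.1)
      rw [Finset.prod_attach A (fun k => e (ω k * x k))]
      refine (Finset.prod_subset (Finset.subset_univ A) fun k _ hk => ?_).symm
      have h0 : ω k = 0 := by
        by_contra h
        exact hk (hω.2 ▸ Finset.mem_filter.mpr ⟨Finset.mem_univ _, h⟩)
      rw [h0, zero_mul]
      show ζ ^ (0 : ZMod q).val = 1
      rw [ZMod.val_zero, pow_zero]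
  rw [Finset.sum_congr rfl stepC]
  -- Step D : evaluate the sum over subsets
  have hGprod : ∀ A ∈ Finset.powersetCard ℓ (Finset.univ : Finset (Fin n)),
      ∏ i ∈ A, (e (c * x i) + e (-c * x i))
        = ∏ i ∈ A, (if x i = 0 then (2 : ℂ) else av) :=
    fun A _ => Finset.prod_congr rfl fun i _ => hG i
  rw [Finset.sum_congr rfl hGprod, ← coeff_prod_one_add Finset.univ
    (fun i => if x i = 0 then (2 : ℂ) else av) ℓ]
  -- split the product
  have hcard2 : (Finset.univ.filter (fun i : Fin n => ¬ x i ≠ 0)).card = n - u := by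
    have h := Finset.card_filter_add_card_filter_not
      (s := (Finset.univ : Finset (Fin n))) (p := fun i => x i ≠ 0)
    rw [hx2, Finset.card_univ, Fintype.card_fin] at h
    omega
  rw [← Finset.prod_filter_mul_prod_filter_not Finset.univ (fun i => x i ≠ 0)]
  have hp1 : ∏ i ∈ Finset.univ.filter (fun i : Fin n => x i ≠ 0),
      (1 + C (if x i = 0 then (2 : ℂ) else av) * X)
        = (1 + C av * X) ^ u := by
    rw [Finset.prod_congr rfl (fun i hi => by
      rw [if_neg (Finset.mem_filter.mp hi).2]), Finset.prod_const, hx2]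
  have hp2 : ∏ i ∈ Finset.univ.filter (fun i : Fin n => ¬ x i ≠ 0),
      (1 + C (if x i = 0 then (2 : ℂ) else av) * X)
        = (1 + C (2 : ℂ) * X) ^ (n - u) := by
    rw [Finset.prod_congr rfl (fun i hi => by
      rw [if_pos (not_not.mp (Finset.mem_filter.mp hi).2)]), Finset.prod_const, hcard2]
  rw [hp1, hp2, Polynomial.coeff_mul]
  rw [Finset.Nat.sum_antidiagonal_eq_sum_range_succ_mk]
  simp only [coeff_one_add_pow]
  -- final algebraic identity
  rw [havdef]
  push_cast
  refine Finset.sum_congr rfl fun j hj => ?_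
  rw [Finset.mem_range] at hj
  have h2ℓ : (2 : ℂ) ^ ℓ = 2 ^ j * 2 ^ (ℓ - j) := by
    rw [← pow_add]
    congr 1
    omega
  rw [h2ℓ, neg_mul, neg_pow, mul_pow]
  ring
end

section
/- For ρ ≥ 1 with ρ ≤ log 2 / log(2cos(π/5)), the minimum over probability distributions P on Z₅ of the quadratic form Q(ρ, P) = Σ_{x₁,x₂} P(x₁)P(x₂) g(x₁,x₂)^{1/ρ}, where g(x₁,x₂) = 1 if x₁ = x₂, 1/2 if x₁ − x₂ ≡ ±1 (mod 5), 0 otherwise, is attained by the uniform distribution and equals (1 + 2^{1−1/ρ})/5. -/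
lemma sum_zmod5' (f : ZMod 5 → ℝ) : ∑ x : ZMod 5, f x = f 0 + f 1 + f 2 + f 3 + f 4 :=
  Fin.sum_univ_five f

lemma key5' (r c p0 p1 p2 p3 p4 : ℝ) (hr : r ^ 2 = 5) (hr2 : 2 ≤ r) (hr3 : r ≤ 3)
    (hc : 0 ≤ c) (hc2 : c * (r + 1) ≤ 2)
    (hs : p0 + p1 + p2 + p3 + p4 = 1) :
    (1 + 2 * c) / 5 ≤ p0 ^ 2 + p1 ^ 2 + p2 ^ 2 + p3 ^ 2 + p4 ^ 2
      + 2 * c * (p0 * p1 + p1 * p2 + p2 * p3 + p3 * p4 + p4 * p0) := by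
  have hl1 : 0 ≤ 1 + c * (r - 1) / 2 := by nlinarith [mul_nonneg hc (by linarith : (0:ℝ) ≤ r - 1)]
  have hl2 : 0 ≤ 1 - c * (r + 1) / 2 := by linarith
  have hB1 : (0:ℝ) ≤ ((10 + 2*r) * (p1 - p4) ^ 2 + 8*r * (p1 - p4) * (p2 - p3)
      + (10 - 2*r) * (p2 - p3) ^ 2) / 16 := by
    have hid1 : ((10 + 2*r) * (p1 - p4) ^ 2 + 8*r * (p1 - p4) * (p2 - p3)
        + (10 - 2*r) * (p2 - p3) ^ 2) * (10 + 2*r)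
        = ((10 + 2*r) * (p1 - p4) + 4*r * (p2 - p3)) ^ 2 := by
      linear_combination (-20 * (p2 - p3) ^ 2) * hr
    nlinarith [sq_nonneg ((10 + 2*r) * (p1 - p4) + 4*r * (p2 - p3))]
  have hB2 : (0:ℝ) ≤ ((10 - 2*r) * (p1 - p4) ^ 2 - 8*r * (p1 - p4) * (p2 - p3)
      + (10 + 2*r) * (p2 - p3) ^ 2) / 16 := by
    have hid2 : ((10 - 2*r) * (p1 - p4) ^ 2 - 8*r * (p1 - p4) * (p2 - p3)
        + (10 + 2*r) * (p2 - p3) ^ 2) * (10 - 2*r)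
        = ((10 - 2*r) * (p1 - p4) - 4*r * (p2 - p3)) ^ 2 := by
      linear_combination (-20 * (p2 - p3) ^ 2) * hr
    nlinarith [sq_nonneg ((10 - 2*r) * (p1 - p4) - 4*r * (p2 - p3))]
  have hC1 : (0:ℝ) ≤ (p0 + (r-1)/4 * (p1 + p4) - (r+1)/4 * (p2 + p3)) ^ 2
      + ((10 + 2*r) * (p1 - p4) ^ 2 + 8*r * (p1 - p4) * (p2 - p3)
      + (10 - 2*r) * (p2 - p3) ^ 2) / 16 := add_nonneg (sq_nonneg _) hB1
  have hC2 : (0:ℝ) ≤ (p0 - (r+1)/4 * (p1 + p4) + (r-1)/4 * (p2 + p3)) ^ 2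
      + ((10 - 2*r) * (p1 - p4) ^ 2 - 8*r * (p1 - p4) * (p2 - p3)
      + (10 + 2*r) * (p2 - p3) ^ 2) / 16 := add_nonneg (sq_nonneg _) hB2
  have hid : 5 * (p0 ^ 2 + p1 ^ 2 + p2 ^ 2 + p3 ^ 2 + p4 ^ 2
      + 2 * c * (p0 * p1 + p1 * p2 + p2 * p3 + p3 * p4 + p4 * p0)) - (1 + 2 * c)
      = 2 * (1 + c * (r - 1) / 2) * ((p0 + (r-1)/4 * (p1 + p4) - (r+1)/4 * (p2 + p3)) ^ 2
        + ((10 + 2*r) * (p1 - p4) ^ 2 + 8*r * (p1 - p4) * (p2 - p3)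
        + (10 - 2*r) * (p2 - p3) ^ 2) / 16)
      + 2 * (1 - c * (r + 1) / 2) * ((p0 - (r+1)/4 * (p1 + p4) + (r-1)/4 * (p2 + p3)) ^ 2
        + ((10 - 2*r) * (p1 - p4) ^ 2 - 8*r * (p1 - p4) * (p2 - p3)
        + (10 + 2*r) * (p2 - p3) ^ 2) / 16) := by
    linear_combination
      (c * ((1/8) * (p1^2 + p2^2 + p3^2 + p4^2) - (5/4)*p3*p4 + (3/4)*p2*p4 - (3/4)*p2*p3
        + (5/4)*p1*p4 + (3/4)*p1*p3 - (5/4)*p1*p2 - p0*p4 + p0*p3 + p0*p2 - p0*p1)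
       - (1/4) * (p1^2 + p2^2 + p3^2 + p4^2)
       + (1/2) * (p3*p4 + p2*p4 - p2*p3 - p1*p4 + p1*p3 + p1*p2)) * hr
      + ((1 + 2*c) * (p0 + p1 + p2 + p3 + p4 + 1)) * hs
  linarith [mul_nonneg hl1 hC1, mul_nonneg hl2 hC2, hid]

/-- For 1 ≤ ρ ≤ log 2 / log(2cos(π/5)), the quadratic form
Q(ρ,P) = Σ P(x₁)P(x₂) g(x₁,x₂)^{1/ρ} over probability vectors P on Z₅ is minimized
by the uniform distribution, with minimum (1 + 2^{1−1/ρ})/5. -/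
theorem stmt15 (ρ : ℝ) (h1 : 1 ≤ ρ)
    (h2 : ρ ≤ Real.log 2 / Real.log (2 * Real.cos (Real.pi / 5)))
    (g : ZMod 5 → ZMod 5 → ℝ)
    (hg : ∀ x₁ x₂, g x₁ x₂ =
      if x₁ = x₂ then 1 else if x₁ - x₂ = 1 ∨ x₁ - x₂ = -1 then 1 / 2 else 0) :
    (∀ P : ZMod 5 → ℝ, (∀ x, 0 ≤ P x) → (∑ x, P x = 1) →
      (1 + (2 : ℝ) ^ (1 - 1 / ρ)) / 5 ≤
        ∑ x₁ : ZMod 5, ∑ x₂ : ZMod 5, P x₁ * P x₂ * g x₁ x₂ ^ (1 / ρ)) ∧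
    (∑ x₁ : ZMod 5, ∑ x₂ : ZMod 5, (1 / 5 : ℝ) * (1 / 5) * g x₁ x₂ ^ (1 / ρ) =
      (1 + (2 : ℝ) ^ (1 - 1 / ρ)) / 5) := by
  have hρ0 : (0:ℝ) < ρ := lt_of_lt_of_le one_pos h1
  have hinv : 0 < 1 / ρ := by positivity
  set r := Real.sqrt 5 with hrdef
  have hr : r ^ 2 = 5 := Real.sq_sqrt (by norm_num)
  have hr0 : 0 ≤ r := Real.sqrt_nonneg 5
  have hr2 : 2 ≤ r := by nlinarith
  have hr3 : r ≤ 3 := by nlinarith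
  set c := ((1/2 : ℝ)) ^ (1/ρ) with hcdef
  have hc0 : 0 < c := Real.rpow_pos_of_pos (by norm_num) _
  have hcos : Real.cos (Real.pi / 5) = (1 + r) / 4 := Real.cos_pi_div_five
  have hA : 2 * Real.cos (Real.pi / 5) = (1 + r) / 2 := by rw [hcos]; ring
  have hA1 : (1:ℝ) < (1 + r) / 2 := by linarith
  have hlogA : 0 < Real.log ((1 + r) / 2) := Real.log_pos hA1
  have h2' : ρ * Real.log ((1 + r) / 2) ≤ Real.log 2 := by
    rw [hA] at h2
    have := (le_div_iff₀ hlogA).mp h2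
    linarith [mul_comm ρ (Real.log ((1 + r) / 2))]
  have ht0 : (0:ℝ) < (2:ℝ) ^ (1/ρ) := Real.rpow_pos_of_pos (by norm_num) _
  have h4 : Real.log ((1 + r) / 2) ≤ Real.log ((2:ℝ) ^ (1/ρ)) := by
    rw [Real.log_rpow (by norm_num : (0:ℝ) < 2), one_div, inv_mul_eq_div,
      le_div_iff₀ hρ0]
    linarith [mul_comm ρ (Real.log ((1 + r) / 2))]
  have h5 : (1 + r) / 2 ≤ (2:ℝ) ^ (1/ρ) := by
    have := Real.exp_le_exp.mpr h4
    rwa [Real.exp_log (by linarith), Real.exp_log ht0] at this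
  have hcinv : c = ((2:ℝ) ^ (1/ρ))⁻¹ := by
    rw [hcdef, show (1/2:ℝ) = 2⁻¹ by norm_num, Real.inv_rpow (by norm_num : (0:ℝ) ≤ 2)]
  have hct : c * ((2:ℝ) ^ (1/ρ)) = 1 := by
    rw [hcinv]; field_simp
  have hc2 : c * (r + 1) ≤ 2 := by
    have := mul_le_mul_of_nonneg_left h5 hc0.le
    nlinarith
  have h2c : (2:ℝ) ^ (1 - 1/ρ) = 2 * c := by
    rw [show (1:ℝ) - 1/ρ = 1 + (-(1/ρ)) by ring, Real.rpow_add (by norm_num : (0:ℝ) < 2),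
      Real.rpow_one, Real.rpow_neg (by norm_num : (0:ℝ) ≤ 2), hcinv]
  constructor
  · intro P hP hsum
    rw [sum_zmod5'] at hsum
    simp only [sum_zmod5', hg]
    simp (config := { decide := true }) only [if_true, if_false]
    simp only [Real.one_rpow, Real.zero_rpow (ne_of_gt hinv), ← hcdef, h2c]
    have hk := key5' r c (P 0) (P 1) (P 2) (P 3) (P 4) hr hr2 hr3 hc0.le hc2 hsum
    nlinarith [hk]
  · simp only [sum_zmod5', hg]
    simp (config := { decide := true }) only [if_true, if_false]
    simp only [Real.one_rpow, Real.zero_rpow (ne_of_gt hinv), ← hcdef, h2c]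
    ring
end
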